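/- arXiv:2605.02760 — 2 statements merged into one kernel-verified Lean document; each statement's English description precedes it below -/
import Mathlib

section
/- Let G be a finite group, 𝓕 a family of subgroups of G closed under conjugation and under taking subgroups, and R a commutative ring with 1. If C is a finite-dimensional chain complex of projective RΓ_G-modules, then its dimension function Dim C : S(G) → ℤ is monotone; that is, (Dim C)(L) ≥ (Dim C)(K) whenever (L) ≤ (K). -/
open CategoryTheory CategoryTheory.Limits Opposite

/-! Core: orbit category over a family of subgroups, modules over it,
chain complexes, dimension functions, homology spheres. -/

/-- The conjugate subgroup `g K g⁻¹`. -/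
def conjSub {G : Type} [Group G] (g : G) (K : Subgroup G) : Subgroup G :=
  K.map (MulAut.conj g).toMonoidHom

/-- A family of subgroups of `G`, closed under conjugation and under taking subgroups. -/
structure SubgroupFamily (G : Type) [Group G] : Type where
  mem : Subgroup G → Prop
  conj_mem : ∀ (g : G) (K : Subgroup G), mem K → mem (conjSub g K)
  le_mem : ∀ (H K : Subgroup G), H ≤ K → mem K → mem H

/-- `(H) ≤ (K)` : some conjugate of `H` is contained in `K`, i.e. `g⁻¹ H g ≤ K` for some `g`. -/
def ConjLE {G : Type} [Group G] (H K : Subgroup G) : Prop := ∃ g : G, H ≤ conjSub g K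

/-- A conjugation-invariant (super class) function. -/
def ConjInv {G : Type} [Group G] (n : Subgroup G → ℤ) : Prop :=
  ∀ (g : G) (K : Subgroup G), n (conjSub g K) = n K

/-- Monotone super class function: `n(H) ≥ n(K)` whenever `(H) ≤ (K)`. -/
def MonotoneConj {G : Type} [Group G] (n : Subgroup G → ℤ) : Prop :=
  ∀ H K : Subgroup G, ConjLE H K → n K ≤ n H

/-- Objects of the orbit category `Or_𝓕 G`: orbits `G/K` with `K ∈ 𝓕`. -/
def OrbitObj {G : Type} [Group G] (F : SubgroupFamily G) : Type := {K : Subgroup G // F.mem K}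

/-- The orbit category: morphisms `G/K → G/L` are the `G`-equivariant maps. -/
instance {G : Type} [Group G] (F : SubgroupFamily G) : Category (OrbitObj F) where
  Hom K L := (G ⧸ K.1) →[G] (G ⧸ L.1)
  id K := MulActionHom.id G
  comp f g := g.comp f

/-- The category of `RΓ_G`-modules: contravariant functors from the orbit
category to `R`-modules. -/
abbrev OrbitMod (R : Type) [CommRing R] {G : Type} [Group G] (F : SubgroupFamily G) :=
  (OrbitObj F)ᵒᵖ ⥤ ModuleCat.{0} R

variable {G : Type} [Group G] {R : Type} [CommRing R] {F : SubgroupFamily G}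

/-- The free `RΓ_G`-module `R[G/H^?]`, with value the free `R`-module on
`Map_G(G/K, G/H)` at the object `G/K`. -/
noncomputable def freeAt (R : Type) [CommRing R] {G : Type} [Group G] {F : SubgroupFamily G}
    (H : OrbitObj F) : OrbitMod R F where
  obj K := ModuleCat.of R ((K.unop ⟶ H) →₀ R)
  map f := ModuleCat.ofHom (Finsupp.lmapDomain R R (fun u => f.unop ≫ u))
  map_id K := by
    apply ModuleCat.hom_ext
    simp only [ModuleCat.hom_ofHom, ModuleCat.hom_id, unop_id, Category.id_comp]
    exact Finsupp.lmapDomain_id R R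
  map_comp f g := by
    apply ModuleCat.hom_ext
    simp only [ModuleCat.hom_ofHom, ModuleCat.hom_comp, unop_comp, Category.assoc]
    exact Finsupp.lmapDomain_comp R R _ _

/-- A free `RΓ_G`-module: a direct sum of modules `R[G/H^?]`, `H ∈ 𝓕`. -/
def IsFreeMod (M : OrbitMod R F) : Prop :=
  ∃ (ι : Type) (b : ι → OrbitObj F), Nonempty (M ≅ ∐ (fun i => freeAt R (b i)))

/-- A finitely generated `RΓ_G`-module: admits an epimorphism from a
finitely generated free module. -/
def IsFGMod (M : OrbitMod R F) : Prop :=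
  ∃ (ι : Type) (_ : Fintype ι) (b : ι → OrbitObj F)
    (π : (∐ (fun i => freeAt R (b i))) ⟶ M), Epi π

/-- A projective `RΓ_G`-module: a direct summand of a free module. -/
def IsProjMod (M : OrbitMod R F) : Prop :=
  ∃ (Fr : OrbitMod R F), IsFreeMod Fr ∧ ∃ (s : M ⟶ Fr) (r : Fr ⟶ M), s ≫ r = 𝟙 M

/-- Chain complexes of `RΓ_G`-modules (non-negatively graded). -/
abbrev OrbitComplex (R : Type) [CommRing R] {G : Type} [Group G] (F : SubgroupFamily G) :=
  ChainComplex (OrbitMod R F) ℕ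

/-- The chain complex `C` vanishes at the object `G/K` in degree `i`. -/
def IsZeroAt (C : OrbitComplex R F) (K : OrbitObj F) (i : ℕ) : Prop :=
  Subsingleton ((C.X i).obj (op K))

/-- The chain complex `C` is finite-dimensional: `C_i = 0` for all large `i`. -/
def IsFiniteDimC (C : OrbitComplex R F) : Prop :=
  ∃ n : ℕ, ∀ i : ℕ, n < i → ∀ K : OrbitObj F, IsZeroAt C K i

/-- The chain complex `C` is finite: finite-dimensional with finitely
generated chain modules. -/
def IsFiniteC (C : OrbitComplex R F) : Prop :=
  IsFiniteDimC C ∧ ∀ i : ℕ, IsFGMod (C.X i)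

/-- `dim C(K)`: the largest `d` with `C_d(K) ≠ 0` (or `-1` for the zero complex). -/
noncomputable def dimAt (C : OrbitComplex R F) (K : OrbitObj F) : ℤ :=
  sSup (insert (-1 : ℤ) {d : ℤ | ∃ i : ℕ, (i : ℤ) = d ∧ ¬ IsZeroAt C K i})

/-- The dimension function `Dim C : S(G) → ℤ`, with value `-1` outside `𝓕`. -/
noncomputable def DimFun (C : OrbitComplex R F) : Subgroup G → ℤ := fun H =>
  open scoped Classical in
  if h : F.mem H then dimAt C ⟨H, h⟩ else -1

/-- The augmented complex `⋯ → C₁ → C₀ → M → 0` (with `M` placed in degree `0`,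
i.e. the whole complex shifted up by one). -/
noncomputable def augment {V : Type 1} [Category.{0} V] [Abelian V]
    (C : ChainComplex V ℕ) (M : V) (π : C.X 0 ⟶ M) (h : C.d 1 0 ≫ π = 0) :
    ChainComplex V ℕ :=
  ChainComplex.of
    (fun j => match j with
      | 0 => M
      | (i+1) => C.X i)
    (fun j => match j with
      | 0 => π
      | (i+1) => C.d (i+1) i)
    (fun j => match j with
      | 0 => h
      | (i+1) => C.d_comp_d (i+2) (i+1) i)

/-- The constant coefficient system `R̲`. -/
noncomputable def constR (R : Type) [CommRing R] {G : Type} [Group G] (F : SubgroupFamily G) :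
    OrbitMod R F :=
  (Functor.const (OrbitObj F)ᵒᵖ).obj (ModuleCat.of R R)

/-- Evaluation of a chain complex over `RΓ_G` at the object `G/K`. -/
noncomputable def evalC (C : OrbitComplex R F) (K : OrbitObj F) :
    ChainComplex (ModuleCat.{0} R) ℕ where
  X i := (C.X i).obj (op K)
  d i j := (C.d i j).app (op K)
  shape i j hij := by rw [C.shape i j hij, NatTrans.app_zero]
  d_comp_d' i j k _ _ := by
    rw [← NatTrans.comp_app, C.d_comp_d]; rfl

/-- The augmented complex of `C(K)` (with `R` in degree `-1`, shifted up by one). -/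
noncomputable def augC (C : OrbitComplex R F) (ε : C.X 0 ⟶ constR R F)
    (h : C.d 1 0 ≫ ε = 0) (K : OrbitObj F) : ChainComplex (ModuleCat.{0} R) ℕ :=
  augment (evalC C K) (ModuleCat.of R R) (ε.app (op K))
    (by show (C.d 1 0).app (op K) ≫ ε.app (op K) = 0
        rw [show (C.d 1 0).app (op K) ≫ ε.app (op K) = (C.d 1 0 ≫ ε).app (op K) from rfl, h]; rfl)

/-- `C` is an `R`-homology `n`-sphere: there is an augmentation `ε : C₀ → R̲`
such that for every `K ∈ 𝓕` the reduced homology of `C(K)` is that of the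
sphere `S^{n(K)}` with coefficients in `R`.  (The homology of the augmented
complex — shifted up by one — is `R` in degree `n(K)+1` and zero elsewhere.) -/
noncomputable def IsHomologySphere (C : OrbitComplex R F) (n : Subgroup G → ℤ) : Prop :=
  ∃ (ε : C.X 0 ⟶ constR R F) (h : C.d 1 0 ≫ ε = 0),
    (∀ K : OrbitObj F, (∃ i, ¬ IsZeroAt C K i) → Function.Surjective (ε.app (op K))) ∧
    ∀ (K : OrbitObj F) (j : ℕ),
      (if (j : ℤ) = n K.1 + 1
        then Nonempty ((augC C ε h K).homology j ≅ ModuleCat.of R R)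
        else Subsingleton ((augC C ε h K).homology j))

/-- The chain map `C(K) → C(H)` induced by a `G`-map `f : G/H → G/K`. -/
noncomputable def evalMap (C : OrbitComplex R F) {H K : OrbitObj F} (f : H ⟶ K) :
    evalC C K ⟶ evalC C H where
  f i := (C.X i).map f.op
  comm' i j _ := (C.d i j).naturality f.op

/-- Condition (ii) of an algebraic homotopy representation: if `n(H) = n(K)`,
every `G`-map `f : G/H → G/K` induces an `R`-homology isomorphism `C(K) → C(H)`. -/
noncomputable def CondII (C : OrbitComplex R F) (n : Subgroup G → ℤ) : Prop :=
  ∀ (H K : OrbitObj F) (f : H ⟶ K), n H.1 = n K.1 →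
    ∀ i : ℕ, IsIso (HomologicalComplex.homologyMap (evalMap C f) i)

/-- Condition (iii) of an algebraic homotopy representation. -/
def CondIII (F : SubgroupFamily G) (n : Subgroup G → ℤ) : Prop :=
  ∀ H K L : Subgroup G, F.mem H → F.mem K → F.mem L → H ≤ K → H ≤ L →
    n H = n K → n H = n L → -1 < n H → F.mem (K ⊔ L) ∧ n (K ⊔ L) = n H
section Aux
variable {G : Type} [Group G] {R : Type} [CommRing R] {F : SubgroupFamily G}

/-- Injectivity of `M.map f` transfers along retracts. -/
lemma retract_map_injective {M N : OrbitMod R F} (s : M ⟶ N) (r : N ⟶ M) (h : s ≫ r = 𝟙 M)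
    {K L : (OrbitObj F)ᵒᵖ} (f : K ⟶ L) (hN : Function.Injective (N.map f)) :
    Function.Injective (M.map f) := by
  have hs : ∀ X : (OrbitObj F)ᵒᵖ, Function.Injective (s.app X) := by
    intro X a b hab
    have h0 := NatTrans.congr_app h X
    rw [NatTrans.comp_app] at h0
    have h1 : r.app X (s.app X a) = r.app X (s.app X b) := by rw [hab]
    have ha : (s.app X ≫ r.app X) a = ((𝟙 M : M ⟶ M).app X) a := by rw [h0]
    have hb : (s.app X ≫ r.app X) b = ((𝟙 M : M ⟶ M).app X) b := by rw [h0]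
    simpa using ha.symm.trans (h1.trans hb)
  intro a b hab
  apply hs K
  apply hN
  have n1 : (s.app K ≫ N.map f) a = (M.map f ≫ s.app L) a := by rw [s.naturality f]
  have n2 : (s.app K ≫ N.map f) b = (M.map f ≫ s.app L) b := by rw [s.naturality f]
  show N.map f (s.app K a) = N.map f (s.app K b)
  calc N.map f (s.app K a) = s.app L (M.map f a) := n1
  _ = s.app L (M.map f b) := by rw [hab]
  _ = N.map f (s.app K b) := n2.symm

end Aux
section Aux2
variable {G : Type} [Group G] {R : Type} [CommRing R] {F : SubgroupFamily G}
variable {ι : Type} (b : ι → OrbitObj F)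

/-- The big free module on the disjoint union of the bases. -/
noncomputable def bigFree (R : Type) [CommRing R] {G : Type} [Group G] {F : SubgroupFamily G}
    {ι : Type} (b : ι → OrbitObj F) : OrbitMod R F where
  obj K := ModuleCat.of R ((Σ i : ι, (K.unop ⟶ b i)) →₀ R)
  map {K L} f := ModuleCat.ofHom (Finsupp.lmapDomain R R
    (fun p : (Σ i : ι, (K.unop ⟶ b i)) => (⟨p.1, f.unop ≫ p.2⟩ : Σ i : ι, (L.unop ⟶ b i))))
  map_id K := by
    apply ModuleCat.hom_ext
    apply Finsupp.lhom_ext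
    intro p r
    show Finsupp.mapDomain _ _ = _
    simp [Finsupp.mapDomain_single]
  map_comp {K L M} f g := by
    apply ModuleCat.hom_ext
    apply Finsupp.lhom_ext
    intro p r
    simp only [ModuleCat.hom_comp, LinearMap.comp_apply]
    show Finsupp.mapDomain _ _ = Finsupp.mapDomain _ (Finsupp.mapDomain _ _)
    simp [Finsupp.mapDomain_single]

/-- Inclusion of the `i`-th free module into the big free module. -/
noncomputable def inclBig (i : ι) : freeAt R (b i) ⟶ bigFree R b where
  app K := ModuleCat.ofHom (Finsupp.lmapDomain R R
    (fun u : (K.unop ⟶ b i) => (⟨i, u⟩ : Σ j : ι, (K.unop ⟶ b j))))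
  naturality K L f := by
    apply ModuleCat.hom_ext
    apply Finsupp.lhom_ext
    intro u r
    show Finsupp.mapDomain _ (Finsupp.mapDomain _ _) = Finsupp.mapDomain _ (Finsupp.mapDomain _ _)
    simp [Finsupp.mapDomain_single]

/-- A natural map from the big free module onto the coproduct. -/
noncomputable def bigToCoprod : bigFree R b ⟶ ∐ (fun i => freeAt R (b i)) where
  app K := ModuleCat.ofHom (Finsupp.lsum ℕ
    (fun p : Σ i : ι, (K.unop ⟶ b i) =>
      ((Sigma.ι (fun i => freeAt R (b i)) p.1).app K).hom.comp (Finsupp.lsingle p.2)))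
  naturality K L f := by
    apply ModuleCat.hom_ext
    apply Finsupp.lhom_ext
    intro p r
    erw [ModuleCat.hom_comp, ModuleCat.hom_comp, LinearMap.comp_apply, LinearMap.comp_apply]
    have e1 : ((bigFree R b).map f).hom (Finsupp.single p r)
        = Finsupp.single (⟨p.1, f.unop ≫ p.2⟩ : Σ i : ι, (L.unop ⟶ b i)) r := by
      show Finsupp.mapDomain _ _ = _
      simp [Finsupp.mapDomain_single]
    erw [e1, Finsupp.lsum_single, Finsupp.lsum_single]
    have nat := (Sigma.ι (fun i => freeAt R (b i)) p.1).naturality f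
    have natr : ((Sigma.ι (fun i => freeAt R (b i)) p.1).app L).hom
        (((freeAt R (b p.1)).map f).hom (Finsupp.single p.2 r))
        = ((∐ fun i => freeAt R (b i)).map f).hom
          (((Sigma.ι (fun i => freeAt R (b i)) p.1).app K).hom (Finsupp.single p.2 r)) :=
      congrArg (fun φ => φ.hom (Finsupp.single p.2 r)) nat
    have e2 : ((freeAt R (b p.1)).map f).hom (Finsupp.single p.2 r)
        = Finsupp.single (f.unop ≫ p.2) r := by
      show Finsupp.mapDomain _ _ = _
      simp [Finsupp.mapDomain_single]
    erw [e2] at natr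
    simp only [LinearMap.comp_apply]
    exact natr

lemma desc_bigToCoprod :
    Sigma.desc (inclBig b) ≫ bigToCoprod b = 𝟙 (∐ (fun i => freeAt R (b i))) := by
  apply Sigma.hom_ext
  intro i
  rw [← Category.assoc, Sigma.ι_desc, Category.comp_id]
  ext K : 2
  apply ModuleCat.hom_ext
  apply Finsupp.lhom_ext
  intro u r
  rw [NatTrans.comp_app]
  show ((bigToCoprod b).app K).hom (((inclBig b i).app K).hom (Finsupp.single u r)) = _
  have e1 : ((inclBig b i).app K).hom (Finsupp.single u r)
      = Finsupp.single (⟨i, u⟩ : Σ j : ι, (K.unop ⟶ b j)) r := by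
    show Finsupp.mapDomain _ _ = _
    simp [Finsupp.mapDomain_single]
  erw [e1]
  show (Finsupp.lsum ℕ _) _ = _
  rw [Finsupp.lsum_single]
  rfl

lemma bigFree_map_injective {K L : (OrbitObj F)ᵒᵖ} (f : K ⟶ L)
    (hf : ∀ H : OrbitObj F, Function.Injective (fun u : (K.unop ⟶ H) => f.unop ≫ u)) :
    Function.Injective ((bigFree R b).map f) := by
  have hinj : Function.Injective (fun p : Σ i : ι, (K.unop ⟶ b i) =>
      (⟨p.1, f.unop ≫ p.2⟩ : Σ i : ι, (L.unop ⟶ b i))) := by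
    rintro ⟨i, u⟩ ⟨j, v⟩ hpq
    have h1 : i = j := congrArg Sigma.fst hpq
    subst h1
    dsimp only at hpq
    have h2 : f.unop ≫ u = f.unop ≫ v := @sigma_mk_injective ι (fun j => (L.unop ⟶ b j)) i _ _ hpq
    rw [hf (b i) h2]
  intro x y h
  exact Finsupp.mapDomain_injective hinj (show Finsupp.mapDomain _ x = Finsupp.mapDomain _ y from h)

lemma coprod_map_injective {K L : (OrbitObj F)ᵒᵖ} (f : K ⟶ L)
    (hf : ∀ H : OrbitObj F, Function.Injective (fun u : (K.unop ⟶ H) => f.unop ≫ u)) :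
    Function.Injective ((∐ fun i => freeAt R (b i)).map f) :=
  retract_map_injective (Sigma.desc (inclBig b)) (bigToCoprod b) (desc_bigToCoprod b) f
    (bigFree_map_injective b f hf)

lemma proj_map_injective (M : OrbitMod R F) (hM : IsProjMod M) {K L : (OrbitObj F)ᵒᵖ}
    (f : K ⟶ L)
    (hf : ∀ H : OrbitObj F, Function.Injective (fun u : (K.unop ⟶ H) => f.unop ≫ u)) :
    Function.Injective (M.map f) := by
  obtain ⟨Fr, ⟨ι, b, ⟨e⟩⟩, s, r, hsr⟩ := hM
  exact retract_map_injective s r hsr f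
    (retract_map_injective e.hom e.inv e.hom_inv_id f (coprod_map_injective b f hf))

end Aux2

section GroupAux
variable {G : Type} [Group G]

/-- The `G`-map `G/L → G/K`, `xL ↦ xgK`, when `L ≤ gKg⁻¹`. -/
def conjHom {L K : Subgroup G} (g : G) (h : L ≤ conjSub g K) : (G ⧸ L) →[G] (G ⧸ K) where
  toFun := Quotient.map' (fun x => x * g) (by
    intro a c hac
    rw [QuotientGroup.leftRel_apply] at hac ⊢
    obtain ⟨k, hk, hk2⟩ := Subgroup.mem_map.mp (h hac)
    have hk2' : g * k * g⁻¹ = a⁻¹ * c := hk2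
    have e : (a * g)⁻¹ * (c * g) = g⁻¹ * (a⁻¹ * c) * g := by group
    have e2 : g⁻¹ * (g * k * g⁻¹) * g = k := by group
    rw [e, ← hk2', e2]; exact hk)
  map_smul' a x := by
    induction x using Quotient.inductionOn with
    | _ z =>
      show QuotientGroup.mk (a * z * g) = a • (QuotientGroup.mk (z * g) : G ⧸ K)
      rw [show a • (QuotientGroup.mk (z * g) : G ⧸ K) = QuotientGroup.mk (a * (z * g)) from rfl]
      congr 1
      group

lemma conjHom_surjective {L K : Subgroup G} (g : G) (h : L ≤ conjSub g K) :
    Function.Surjective (conjHom g h) := by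
  intro y
  obtain ⟨x⟩ := y
  refine ⟨Quotient.mk'' (x * g⁻¹), ?_⟩
  show Quotient.mk'' (x * g⁻¹ * g) = Quotient.mk'' x
  congr 1
  group

end GroupAux
section MainAux
variable {G : Type} [Group G] {R : Type} [CommRing R] {F : SubgroupFamily G}

/-- View a morphism of the orbit category as an equivariant map. -/
def asMap {X Y : OrbitObj F} (φ : X ⟶ Y) : (G ⧸ X.1) →[G] (G ⧸ Y.1) := φ

/-- The orbit category morphism `G/L → G/K` induced by `L ≤ gKg⁻¹`. -/
def conjOrbitHom (X Y : OrbitObj F) (g : G) (h : X.1 ≤ conjSub g Y.1) : X ⟶ Y :=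
  conjHom g h

lemma precomp_injective {X Y : OrbitObj F} (φ : X ⟶ Y)
    (hφ : Function.Surjective (asMap φ)) (H : OrbitObj F) :
    Function.Injective (fun u : (Y ⟶ H) => φ ≫ u) := by
  intro u v huv
  have huv' : (asMap u).comp (asMap φ) = (asMap v).comp (asMap φ) := huv
  have h2 : asMap u = asMap v := by
    ext y
    obtain ⟨x, rfl⟩ := hφ y
    exact DFunLike.congr_fun huv' x
  exact h2

end MainAux

/-- cf. [HPY, Lemma on monotonicity].  For a finite group `G`,
a family `𝓕` of subgroups closed under conjugation and subgroups, and a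
commutative ring `R`: the dimension function of any finite-dimensional chain
complex of projective `RΓ_G`-modules is monotone, i.e.
`(Dim C)(L) ≥ (Dim C)(K)` whenever `(L) ≤ (K)`. -/
theorem statement0 (G R : Type) [Group G] [Finite G] [CommRing R]
    (F : SubgroupFamily G) (C : OrbitComplex R F)
    (hfin : IsFiniteDimC C) (hproj : ∀ i : ℕ, IsProjMod (C.X i)) :
    MonotoneConj (DimFun C) := by
  obtain ⟨n, hn⟩ := hfin
  have bdd : ∀ P : OrbitObj F,
      BddAbove (insert (-1 : ℤ) {d : ℤ | ∃ i : ℕ, (i : ℤ) = d ∧ ¬ IsZeroAt C P i}) := by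
    intro P
    refine ⟨(n : ℤ), ?_⟩
    rintro d (rfl | ⟨i, rfl, hi⟩)
    · have : (0 : ℤ) ≤ n := Int.ofNat_nonneg n
      omega
    · by_contra hlt
      push_neg at hlt
      have : n < i := by exact_mod_cast hlt
      exact hi (hn i this P)
  intro L K hLK
  obtain ⟨g, hg⟩ := hLK
  unfold DimFun
  by_cases hK : F.mem K
  · have hgK : F.mem (conjSub g K) := F.conj_mem g K hK
    have hL : F.mem L := F.le_mem L (conjSub g K) hg hgK
    rw [dif_pos hK, dif_pos hL]
    let φ := conjOrbitHom (F := F) ⟨L, hL⟩ ⟨K, hK⟩ g hg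
    have hφ : Function.Surjective (asMap φ) := conjHom_surjective g hg
    apply csSup_le_csSup (bdd _) ⟨-1, Set.mem_insert _ _⟩
    rintro d (rfl | ⟨i, rfl, hi⟩)
    · exact Set.mem_insert _ _
    · refine Set.mem_insert_of_mem _ ⟨i, rfl, ?_⟩
      intro hzero
      apply hi
      have hinj : Function.Injective ((C.X i).map φ.op) :=
        proj_map_injective (C.X i) (hproj i) φ.op (precomp_injective φ hφ)
      haveI : Subsingleton ((C.X i).obj (op ⟨L, hL⟩)) := hzero
      exact ⟨fun a c => hinj (Subsingleton.elim _ _)⟩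
  · rw [dif_neg hK]
    by_cases hL : F.mem L
    · rw [dif_pos hL]
      exact le_csSup (bdd _) (Set.mem_insert _ _)
    · rw [dif_neg hL]
end

section
/- Let p be a prime and G a finite p-group of rank two (G contains a subgroup isomorphic to ℤ/p × ℤ/p but no subgroup isomorphic to (ℤ/p)³). Then there exists a nonzero finite-dimensional real inner product space V with an orthogonal (isometric linear) action of G such that for every unit vector x in the unit sphere S(V), the stabilizer G_x = {g ∈ G : g·x = x} has rank at most 1, i.e. G_x contains no subgroup isomorphic to ℤ/p × ℤ/p. -/
section AuxRep

variable {G : Type} [Group G] [Fintype G]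

/-- The left regular orthogonal representation of a finite group on `EuclideanSpace ℝ G`. -/
noncomputable def regRep (G : Type) [Group G] [Fintype G] :
    G →* (EuclideanSpace ℝ G ≃ₗᵢ[ℝ] EuclideanSpace ℝ G) where
  toFun g := LinearIsometryEquiv.piLpCongrLeft 2 ℝ ℝ (Equiv.mulLeft g)
  map_one' := by
    refine LinearIsometryEquiv.ext fun v => PiLp.ext fun i => ?_
    simp [LinearIsometryEquiv.piLpCongrLeft_apply, Equiv.piCongrLeft']
    rfl
  map_mul' g h := by
    refine LinearIsometryEquiv.ext fun v => PiLp.ext fun i => ?_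
    simp [LinearIsometryEquiv.piLpCongrLeft_apply, Equiv.piCongrLeft',
      LinearIsometryEquiv.coe_mul, Equiv.mulLeft, mul_assoc]

theorem regRep_apply (g : G) (v : EuclideanSpace ℝ G) (i : G) :
    regRep G g v i = v (g⁻¹ * i) := rfl

end AuxRep

section Restrict

variable {G : Type} [Group G] {E : Type} [NormedAddCommGroup E] [InnerProductSpace ℝ E]

/-- Restriction of an orthogonal representation to an invariant subspace. -/
noncomputable def restrictRep (ρ : G →* (E ≃ₗᵢ[ℝ] E)) (U : Submodule ℝ E)
    (hU : ∀ g : G, ∀ x ∈ U, ρ g x ∈ U) : G →* (U ≃ₗᵢ[ℝ] U) where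
  toFun g :=
    { toFun := fun x => ⟨ρ g x, hU g x x.2⟩
      invFun := fun x => ⟨ρ g⁻¹ x, hU g⁻¹ x x.2⟩
      map_add' := fun x y => Subtype.ext (by simp)
      map_smul' := fun c x => Subtype.ext (by simp)
      left_inv := fun x => Subtype.ext (by
        show ρ g⁻¹ (ρ g x) = (x : E)
        have : ρ g⁻¹ * ρ g = 1 := by rw [← map_mul, inv_mul_cancel, map_one]
        calc ρ g⁻¹ (ρ g x) = (ρ g⁻¹ * ρ g) (x : E) := rfl
          _ = (x : E) := by rw [this]; rfl)
      right_inv := fun x => Subtype.ext (by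
        show ρ g (ρ g⁻¹ x) = (x : E)
        have : ρ g * ρ g⁻¹ = 1 := by rw [← map_mul, mul_inv_cancel, map_one]
        calc ρ g (ρ g⁻¹ x) = (ρ g * ρ g⁻¹) (x : E) := rfl
          _ = (x : E) := by rw [this]; rfl)
      norm_map' := fun x => by
        rw [← Submodule.norm_coe]
        exact (ρ g).norm_map x }
  map_one' := by
    refine LinearIsometryEquiv.ext fun x => Subtype.ext ?_
    show (ρ 1) (x : E) = (x : E)
    rw [map_one]; rfl
  map_mul' g h := by
    refine LinearIsometryEquiv.ext fun x => Subtype.ext ?_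
    show (ρ (g * h)) (x : E) = ρ g (ρ h x)
    rw [map_mul]; rfl

theorem restrictRep_coe (ρ : G →* (E ≃ₗᵢ[ℝ] E)) (U : Submodule ℝ E)
    (hU : ∀ g : G, ∀ x ∈ U, ρ g x ∈ U) (g : G) (x : U) :
    (restrictRep ρ U hU g x : E) = ρ g x := rfl

end Restrict

section AuxGroup

/-- If `A ≅ (ℤ/q)²` is a subgroup of a `p`-group, then `q = p`. -/
theorem q_eq_p_of_subgroup {p q : ℕ} (hp : p.Prime) (hq : q.Prime) {G : Type} [Group G]
    (hpG : IsPGroup p G) (A : Subgroup G) (e : A ≃* Multiplicative (ZMod q × ZMod q)) :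
    q = p := by
  haveI := Fact.mk hq
  set a : A := e.symm (Multiplicative.ofAdd ((1 : ZMod q), (0 : ZMod q))) with ha
  have ha1 : a ≠ 1 := by
    intro h
    have := congrArg e h
    rw [MulEquiv.apply_symm_apply, map_one] at this
    have h2 := congrArg Multiplicative.toAdd this
    simp at h2
  have haq : a ^ q = 1 := by
    rw [ha, ← map_pow, ← ofAdd_nsmul]
    have : q • ((1 : ZMod q), (0 : ZMod q)) = ((0 : ZMod q), (0 : ZMod q)) := by
      simp [Prod.smul_mk, nsmul_eq_mul]
    rw [this]
    simp
  have horder : orderOf a = q := orderOf_eq_prime haq ha1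
  obtain ⟨k, hk⟩ := (hpG.to_subgroup A) a
  have : q ∣ p ^ k := horder ▸ orderOf_dvd_of_pow_eq_one hk
  exact (Nat.prime_dvd_prime_iff_eq hq hp).mp (hq.dvd_of_dvd_pow this)

/-- If a rank-2 elementary abelian subgroup `A` exists and `z` is a central element of
order `p` not in `A`, we can build a rank-3 elementary abelian subgroup. -/
theorem central_mem_of_rank2 {p : ℕ} (hp : p.Prime) {G : Type} [Group G]
    (z : G) (hz : z ∈ Subgroup.center G) (hzp : orderOf z = p)
    (A : Subgroup G) (e : A ≃* Multiplicative (ZMod p × ZMod p))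
    (hrk3 : ¬ ∃ B : Subgroup G, Nonempty (B ≃* Multiplicative (ZMod p × ZMod p × ZMod p))) :
    z ∈ A := by
  haveI := Fact.mk hp
  by_contra hzA
  have hzcomm : ∀ w : G, Commute z w := fun w => ((Subgroup.mem_center_iff.mp hz) w).symm
  -- the homomorphism (ℤ/p)³ → G
  set f : Multiplicative (ZMod p × ZMod p × ZMod p) →* G := MonoidHom.mk'
    (fun m => ((e.symm (Multiplicative.ofAdd ((Multiplicative.toAdd m).1,
        (Multiplicative.toAdd m).2.1)) : A) : G) * z ^ ((Multiplicative.toAdd m).2.2.val))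
    (by
      intro m n
      rcases hm : Multiplicative.toAdd m with ⟨a₁, a₂, a₃⟩
      rcases hn : Multiplicative.toAdd n with ⟨b₁, b₂, b₃⟩
      simp only [toAdd_mul, hm, hn, Prod.mk_add_mk]
      have hpow : z ^ ((a₃ + b₃).val) = z ^ a₃.val * z ^ b₃.val := by
        have hzpow : ∀ n : ℕ, z ^ (n % p) = z ^ n := by
          intro n; rw [← hzp]; exact pow_mod_orderOf z n
        rw [ZMod.val_add, hzpow, pow_add]
      have hofadd : Multiplicative.ofAdd ((a₁ + b₁ : ZMod p), (a₂ + b₂ : ZMod p))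
          = Multiplicative.ofAdd (a₁, a₂) * Multiplicative.ofAdd (b₁, b₂) := by
        rw [← ofAdd_add]; rfl
      rw [hpow, hofadd, map_mul]
      push_cast
      exact (((hzcomm _).pow_left a₃.val).mul_mul_mul_comm _ _).symm)
  have hfinj : Function.Injective f := by
    rw [injective_iff_map_eq_one]
    intro m hm1
    rcases hm : Multiplicative.toAdd m with ⟨a₁, a₂, a₃⟩
    have hm1' : ((e.symm (Multiplicative.ofAdd (a₁, a₂)) : A) : G) * z ^ a₃.val = 1 := by
      have := hm1
      simp only [f, MonoidHom.mk'_apply, hm] at this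
      exact this
    have hzs : z ^ a₃.val ∈ A := by
      rw [← mul_eq_one_iff_inv_eq.mp hm1']
      exact A.inv_mem (e.symm (Multiplicative.ofAdd (a₁, a₂))).2
    have ha₃ : a₃ = 0 := by
      by_contra ha₃
      have hv0 : a₃.val ≠ 0 := fun h => ha₃ ((ZMod.val_eq_zero a₃).mp h)
      have hvlt : a₃.val < p := ZMod.val_lt a₃
      have hcop : (a₃.val).Coprime (orderOf z) := by
        rw [hzp]
        exact Nat.coprime_comm.mp (hp.coprime_iff_not_dvd.mpr
          (fun hd => absurd (Nat.le_of_dvd (Nat.pos_of_ne_zero hv0) hd) (not_le.mpr hvlt)))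
      obtain ⟨m', hm'⟩ := exists_pow_eq_self_of_coprime hcop
      exact hzA (hm' ▸ A.pow_mem hzs m')
    have hs0 : a₃.val = 0 := (ZMod.val_eq_zero a₃).mpr ha₃
    rw [hs0, pow_zero, mul_one] at hm1'
    have hu1 : (e.symm (Multiplicative.ofAdd (a₁, a₂)) : A) = 1 := by
      exact Subtype.ext hm1'
    have := congrArg e hu1
    rw [MulEquiv.apply_symm_apply, map_one] at this
    have h2 := congrArg Multiplicative.toAdd this
    simp only [toAdd_ofAdd, toAdd_one] at h2
    have : m = 1 := by
      have : Multiplicative.toAdd m = 0 := by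
        rw [hm, ha₃]
        rw [Prod.ext_iff] at h2
        obtain ⟨h21, h22⟩ := h2
        simp only at h21 h22
        rw [h21, h22]
        rfl
      have := congrArg Multiplicative.ofAdd this
      simpa using this
    exact this
  exact hrk3 ⟨f.range, ⟨(MonoidHom.ofInjective hfinj).symm⟩⟩

end AuxGroup

theorem exists_central_order_p {p : ℕ} (hp : p.Prime) {G : Type} [Group G] [Finite G]
    [Nontrivial G] (hpG : IsPGroup p G) :
    ∃ z : G, z ∈ Subgroup.center G ∧ orderOf z = p := by
  haveI := Fact.mk hp
  haveI := hpG.center_nontrivial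
  haveI : Fintype (Subgroup.center G) := Fintype.ofFinite _
  obtain ⟨n, hn⟩ := IsPGroup.iff_card.mp (hpG.to_subgroup (Subgroup.center G))
  have hn0 : n ≠ 0 := by
    intro h
    rw [h, pow_zero] at hn
    exact (Finite.one_lt_card (α := Subgroup.center G)).ne' hn
  have hdvd : p ∣ Fintype.card (Subgroup.center G) := by
    rw [← Nat.card_eq_fintype_card, hn]
    exact dvd_pow_self p hn0
  obtain ⟨z, hz⟩ := exists_prime_orderOf_dvd_card p hdvd
  exact ⟨z, z.2, (Subgroup.orderOf_coe z).trans hz⟩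



/-- An orthogonal representation of `G`: a finite-dimensional real inner
product space `V` together with an action of `G` by linear isometries. -/
structure OrthogonalRep (G : Type) [Group G] : Type 1 where
  V : Type
  [nacg : NormedAddCommGroup V]
  [ips : InnerProductSpace ℝ V]
  [fd : FiniteDimensional ℝ V]
  ρ : G →* (V ≃ₗᵢ[ℝ] V)

attribute [instance] OrthogonalRep.nacg OrthogonalRep.ips OrthogonalRep.fd

/-- cf. Dotzel–Hamrick.  Every finite `p`-group of rank two
admits a nonzero orthogonal representation `V` such that the isotropy subgroup
of every unit vector `x ∈ S(V)` has rank at most one, i.e. the stabilizer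
`G_x` contains no subgroup isomorphic to `ℤ/q × ℤ/q` for any prime `q`. -/
theorem statement13 (p : ℕ) (hp : p.Prime) (G : Type) [Group G] [Finite G]
    (hpG : IsPGroup p G)
    (hrk2 : ∃ A : Subgroup G, Nonempty (A ≃* Multiplicative (ZMod p × ZMod p)))
    (hrk3 : ¬ ∃ A : Subgroup G, Nonempty (A ≃* Multiplicative (ZMod p × ZMod p × ZMod p))) :
    ∃ W : OrthogonalRep G, Nontrivial W.V ∧
      ∀ x : W.V, ‖x‖ = 1 →
        ∀ q : ℕ, q.Prime →
          ¬ ∃ A : Subgroup G, (∀ g ∈ A, W.ρ g x = x) ∧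
              Nonempty (A ≃* Multiplicative (ZMod q × ZMod q)) := by
  haveI := Fact.mk hp
  haveI : Fintype G := Fintype.ofFinite G
  classical
  obtain ⟨A₀, ⟨e₀⟩⟩ := hrk2
  haveI : Nontrivial G := by
    refine ⟨((e₀.symm (Multiplicative.ofAdd ((1 : ZMod p), 0)) : A₀) : G), 1, ?_⟩
    intro h
    have h1 : (e₀.symm (Multiplicative.ofAdd ((1 : ZMod p), 0)) : A₀) = 1 := Subtype.ext h
    have h2 := congrArg e₀ h1
    rw [MulEquiv.apply_symm_apply, map_one] at h2
    have h3 := congrArg Multiplicative.toAdd h2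
    simp at h3
  obtain ⟨z, hzc, hzp⟩ := exists_central_order_p hp hpG
  have hz1 : z ≠ 1 := by
    intro h
    rw [h, orderOf_one] at hzp
    exact hp.one_lt.ne' hzp.symm
  set ρ₀ := regRep G with hρ₀
  set F : Submodule ℝ (EuclideanSpace ℝ G) :=
    { carrier := {v | ρ₀ z v = v}
      add_mem' := fun hu hv => by
        simp only [Set.mem_setOf_eq] at *
        rw [map_add, hu, hv]
      zero_mem' := by simp only [Set.mem_setOf_eq]; exact map_zero _
      smul_mem' := fun c v hv => by
        simp only [Set.mem_setOf_eq] at *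
        rw [map_smul, hv] } with hF
  have memF : ∀ v : EuclideanSpace ℝ G, v ∈ F ↔ ρ₀ z v = v := fun v => Iff.rfl
  have hFinv : ∀ g : G, ∀ w ∈ F, ρ₀ g w ∈ F := by
    intro g w hw
    rw [memF] at hw ⊢
    calc ρ₀ z (ρ₀ g w) = ρ₀ (z * g) w := by rw [map_mul]; rfl
      _ = ρ₀ (g * z) w := by rw [(Subgroup.mem_center_iff.mp hzc g).symm]
      _ = ρ₀ g (ρ₀ z w) := by rw [map_mul]; rfl
      _ = ρ₀ g w := by rw [hw]
  have hcancel : ∀ (g : G) (v : EuclideanSpace ℝ G), ρ₀ g⁻¹ (ρ₀ g v) = v := by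
    intro g v
    calc ρ₀ g⁻¹ (ρ₀ g v) = ρ₀ (g⁻¹ * g) v := by rw [map_mul]; rfl
      _ = v := by rw [inv_mul_cancel, map_one]; rfl
  have hVinv : ∀ g : G, ∀ v ∈ Fᗮ, ρ₀ g v ∈ Fᗮ := by
    intro g v hv
    rw [Submodule.mem_orthogonal] at hv ⊢
    intro u hu
    calc (inner ℝ u (ρ₀ g v) : ℝ)
        = inner ℝ (ρ₀ g⁻¹ u) (ρ₀ g⁻¹ (ρ₀ g v)) := ((ρ₀ g⁻¹).inner_map_map u (ρ₀ g v)).symm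
      _ = inner ℝ (ρ₀ g⁻¹ u) v := by rw [hcancel]
      _ = 0 := hv _ (hFinv g⁻¹ u hu)
  refine ⟨⟨↥(Fᗮ), restrictRep ρ₀ Fᗮ hVinv⟩, ?_, ?_⟩
  · rw [Submodule.nontrivial_iff_ne_bot]
    intro hbot
    rw [Submodule.orthogonal_eq_bot_iff] at hbot
    have hmem : EuclideanSpace.single (1 : G) (1 : ℝ) ∈ F := hbot ▸ Submodule.mem_top
    rw [memF] at hmem
    have h1 := congrFun (congrArg WithLp.ofLp hmem) z
    rw [regRep_apply, inv_mul_cancel] at h1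
    simp [EuclideanSpace.single_apply, hz1] at h1
  · rintro x hx q hq ⟨A, hfix, ⟨e⟩⟩
    have hqp : q = p := q_eq_p_of_subgroup hp hq hpG A e
    subst hqp
    have hzA : z ∈ A := central_mem_of_rank2 hp z hzc hzp A e hrk3
    have hxF : (x : EuclideanSpace ℝ G) ∈ F := by
      rw [memF]
      exact congrArg Subtype.val (hfix z hzA)
    have hx0 : (x : EuclideanSpace ℝ G) = 0 :=
      inner_self_eq_zero.mp ((Submodule.mem_orthogonal F _).mp x.2 _ hxF)
    rw [← Submodule.norm_coe, hx0, norm_zero] at hx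
    exact one_ne_zero hx.symm
end
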